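/- For any integer k ≥ 0, the subspace x × P_{k-1}³ of P_k³ has dimension dim(P_k³) − dim(P_{k+1}) + 1, i.e. 3·(k+1)(k+2)(k+3)/6 − (k+2)(k+3)(k+4)/6 + 1. -/

import Mathlib

open MvPolynomial

/-- Scalar polynomials of degree at most `n` (with `P_{-1} = {0}` for negative `n`). -/
noncomputable def Pscal (n : ℤ) : Submodule ℝ (MvPolynomial (Fin 3) ℝ) :=
  if 0 ≤ n then restrictTotalDegree (Fin 3) ℝ n.toNat else ⊥

/-- Vector polynomials of degree at most `n` in each component. -/
noncomputable def Pvec (n : ℤ) : Submodule ℝ (Fin 3 → MvPolynomial (Fin 3) ℝ) :=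
  Submodule.pi Set.univ fun _ : Fin 3 => Pscal n

/-- The linear map `q ↦ x × q(x)` on vector polynomials. -/
noncomputable def crossX : (Fin 3 → MvPolynomial (Fin 3) ℝ) →ₗ[ℝ]
    (Fin 3 → MvPolynomial (Fin 3) ℝ) where
  toFun q := fun i => X (i + 1) * q (i + 2) - X (i + 2) * q (i + 1)
  map_add' p q := by funext i; simp [mul_add]; ring
  map_smul' c p := by funext i; simp [mul_smul_comm, smul_sub]

/-! ### Auxiliary material -/

set_option synthInstance.maxHeartbeats 1000000
set_option maxHeartbeats 1000000

/-- The linear map `p ↦ (X 0 * p, X 1 * p, X 2 * p)`. -/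
noncomputable def mulX : MvPolynomial (Fin 3) ℝ →ₗ[ℝ] (Fin 3 → MvPolynomial (Fin 3) ℝ) where
  toFun p := fun i => X i * p
  map_add' p q := by funext i; simp [mul_add]
  map_smul' c p := by funext i; simp [mul_smul_comm]

lemma mem_Pscal {n : ℤ} (hn : 0 ≤ n) {p : MvPolynomial (Fin 3) ℝ} :
    p ∈ Pscal n ↔ p.totalDegree ≤ n.toNat := by
  rw [Pscal, if_pos hn, mem_restrictTotalDegree]

lemma Pscal_neg {n : ℤ} (hn : n < 0) : Pscal n = ⊥ := by
  rw [Pscal, if_neg (by omega)]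

lemma cross_factor {i j : Fin 3} (hij : i ≠ j) (a b : MvPolynomial (Fin 3) ℝ)
    (h : X i * a = X j * b) : ∃ p, b = X i * p ∧ a = X j * p := by
  classical
  have hb : ∀ d : Fin 3 →₀ ℕ, d i = 0 → coeff d b = 0 := by
    intro d hd
    have h2 := congrArg (coeff (Finsupp.single j 1 + d)) h
    rw [coeff_X_mul, coeff_X_mul'] at h2
    rw [← h2]
    have : i ∉ (Finsupp.single j 1 + d).support := by
      simp [Finsupp.mem_support_iff, Finsupp.single_apply, hij.symm, hd]
    simp [this]
  set p := b.divMonomial (Finsupp.single i 1) with hp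
  have hbfac : b = X i * p := by
    have hmod : b.modMonomial (Finsupp.single i 1) = 0 := by
      ext d
      by_cases hle : Finsupp.single i 1 ≤ d
      · rw [coeff_modMonomial_of_le _ hle]; simp
      · rw [coeff_modMonomial_of_not_le _ hle]
        rw [Finsupp.single_le_iff] at hle
        simp [hb d (by omega)]
    conv_lhs => rw [← divMonomial_add_modMonomial_single b i]
    rw [hmod, add_zero]
  refine ⟨p, hbfac, ?_⟩
  have hX : (X i : MvPolynomial (Fin 3) ℝ) ≠ 0 := X_ne_zero i
  apply mul_left_cancel₀ hX
  rw [h, hbfac]; ring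

lemma ker_inf (n : ℤ) (hn : 0 ≤ n) :
    LinearMap.ker crossX ⊓ Pvec n = Submodule.map mulX (Pscal (n - 1)) := by
  apply le_antisymm
  · rintro q ⟨hker, hmem⟩
    have hker' : ∀ i, X (i + 1) * q (i + 2) - X (i + 2) * q (i + 1) = 0 :=
      fun i => congrFun (LinearMap.mem_ker.mp hker) i
    have h2 := hker' 2
    have h1 := hker' 1
    have e : ((2:Fin 3)+1 = 0) ∧ ((2:Fin 3)+2 = 1) ∧ ((1:Fin 3)+1 = 2) ∧ ((1:Fin 3)+2 = 0) := by
      decide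
    rw [e.1, e.2.1] at h2
    rw [e.2.2.1, e.2.2.2] at h1
    have hq : ∀ i, q i ∈ Pscal n := fun i => hmem i (Set.mem_univ i)
    by_cases h0 : q 0 = 0
    · have hq1 : q 1 = 0 := by
        have : X 0 * q 1 = 0 := by rw [sub_eq_zero] at h2; rw [h2, h0, mul_zero]
        rcases mul_eq_zero.mp this with h | h
        · exact absurd h (X_ne_zero 0)
        · exact h
      have hq2 : q 2 = 0 := by
        have : X 0 * q 2 = 0 := by rw [sub_eq_zero] at h1; rw [← h1, h0, mul_zero]
        rcases mul_eq_zero.mp this with h | h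
        · exact absurd h (X_ne_zero 0)
        · exact h
      refine ⟨0, zero_mem _, ?_⟩
      funext i
      fin_cases i <;> simp [mulX, h0, hq1, hq2]
    · rw [sub_eq_zero] at h2 h1
      obtain ⟨p, hb, ha⟩ := cross_factor (by decide : (0:Fin 3) ≠ 1) (q 1) (q 0) h2
      have hc : q 2 = X 2 * p := by
        apply mul_left_cancel₀ (X_ne_zero (0 : Fin 3))
        rw [← h1, hb]; ring
      refine ⟨p, ?_, ?_⟩
      · show p ∈ Pscal (n - 1)
        have hp0 : p ≠ 0 := by rintro rfl; rw [mul_zero] at hb; exact h0 hb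
        have hsup : ∀ d ∈ p.support, (d.sum fun _ e => e) + 1 ≤ n.toNat := by
          intro d hd
          have : coeff (Finsupp.single 0 1 + d) (q 0) ≠ 0 := by
            rw [hb, coeff_X_mul]; exact mem_support_iff.mp hd
          have hmem2 := le_totalDegree (mem_support_iff.mpr this)
          have hdeg := (mem_Pscal hn).mp (hq 0)
          have hsum : ((Finsupp.single (0:Fin 3) 1 + d).sum fun _ e => e)
              = 1 + (d.sum fun _ e => e) := by
            rw [Finsupp.sum_add_index (by simp) (by simp)]
            simp [Finsupp.sum_single_index]
          omega
        have hn1 : 1 ≤ n := by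
          by_contra hlt
          have hn0 : n = 0 := by omega
          obtain ⟨d, hd⟩ := MvPolynomial.support_nonempty.mpr hp0
          have := hsup d hd
          omega
        rw [mem_Pscal (by omega : (0:ℤ) ≤ n - 1)]
        rw [totalDegree]
        apply Finset.sup_le
        intro d hd
        have := hsup d hd
        omega
      · funext i
        fin_cases i <;> simp [mulX, hb, ha, hc]
  · rintro q ⟨p, hp, rfl⟩
    constructor
    · show crossX (mulX p) = 0
      funext i
      show X (i+1) * (X (i+2) * p) - X (i+2) * (X (i+1) * p) = 0
      ring
    · intro i _
      show X i * p ∈ Pscal n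
      by_cases h1 : 1 ≤ n
      · rw [mem_Pscal hn]
        have hp' := (mem_Pscal (by omega : (0:ℤ) ≤ n - 1)).mp hp
        have := totalDegree_mul (X i) p
        rw [totalDegree_X] at this
        omega
      · have hb : Pscal (n - 1) = ⊥ := Pscal_neg (by omega)
        have hp : p ∈ (⊥ : Submodule ℝ (MvPolynomial (Fin 3) ℝ)) := hb ▸ hp
        rw [Submodule.mem_bot] at hp
        rw [hp, mul_zero]
        exact zero_mem _

lemma finsupp_sum_cons {n : ℕ} (y : ℕ) (s : Fin n →₀ ℕ) :
    (Finsupp.cons y s).sum (fun _ e => e) = y + s.sum (fun _ e => e) := by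
  rw [Finsupp.sum_fintype _ _ (fun _ => rfl), Finsupp.sum_fintype _ _ (fun _ => rfl)]
  rw [Fin.sum_univ_succ]
  simp [Finsupp.cons_zero, Finsupp.cons_succ]

/-- number of monomials in 3 vars of degree ≤ m -/
lemma card_le_deg (m : ℕ) :
    Nat.card {d : Fin 3 →₀ ℕ // (d.sum fun _ e => e) ≤ m} = (m + 3).choose 3 := by
  classical
  have e1 : {d : Fin 3 →₀ ℕ // (d.sum fun _ e => e) ≤ m} ≃
      {d : Fin 4 →₀ ℕ // (d.sum fun _ e => e) = m} :=
    { toFun := fun d => ⟨Finsupp.cons (m - d.1.sum fun _ e => e) d.1, by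
        rw [finsupp_sum_cons]; omega⟩
      invFun := fun e => ⟨Finsupp.tail e.1, by
        have := e.2
        rw [← Finsupp.cons_tail e.1, finsupp_sum_cons] at this
        omega⟩
      left_inv := fun d => by simp [Finsupp.tail_cons]
      right_inv := fun e => by
        have h := e.2
        rw [← Finsupp.cons_tail e.1, finsupp_sum_cons] at h
        ext : 1
        simp only
        conv_rhs => rw [← Finsupp.cons_tail e.1]
        congr 1
        omega }
  have e2 : {d : Fin 4 →₀ ℕ // (d.sum fun _ e => e) = m} ≃ Sym (Fin 4) m :=
    { toFun := fun d => ⟨Finsupp.toMultiset d.1, by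
        rw [Finsupp.card_toMultiset]; exact d.2⟩
      invFun := fun s => ⟨Multiset.toFinsupp s.1, by
        have : (Multiset.toFinsupp s.1).sum (fun _ e => e) =
            Multiset.card (Finsupp.toMultiset (Multiset.toFinsupp s.1)) := by
          rw [Finsupp.card_toMultiset]; rfl
        rw [this, Multiset.toFinsupp_toMultiset]; exact s.2⟩
      left_inv := fun d => by ext : 1; simp
      right_inv := fun s => by ext : 1; simp [Multiset.toFinsupp_toMultiset] }
  rw [Nat.card_congr (e1.trans e2), Nat.card_eq_fintype_card, Sym.card_sym_eq_choose]
  simp only [Fintype.card_fin]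
  rw [show 4 + m - 1 = m + 3 by omega, ← Nat.choose_symm (by omega : 3 ≤ m + 3),
    show m + 3 - 3 = m by omega]

lemma finrank_Pscal (m : ℕ) : Module.finrank ℝ (Pscal (m : ℤ)) = (m + 3).choose 3 := by
  have h : Pscal (m : ℤ) = restrictTotalDegree (Fin 3) ℝ m := by
    rw [Pscal, if_pos (by omega : (0:ℤ) ≤ m), Int.toNat_natCast]
  rw [h, restrictTotalDegree]
  rw [Module.finrank_eq_nat_card_basis (basisRestrictSupport ℝ _)]
  exact card_le_deg m

instance Pscal_fd (n : ℤ) : FiniteDimensional ℝ (Pscal n) := by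
  by_cases h : 0 ≤ n
  · rw [Pscal, if_pos h]; infer_instance
  · rw [Pscal, if_neg h]; infer_instance

/-- `Pvec n` is equivalent to a triple of `Pscal n`'s. -/
noncomputable def pvecEquiv (n : ℤ) : Pvec n ≃ₗ[ℝ] (Fin 3 → Pscal n) where
  toFun q := fun i => ⟨q.1 i, q.2 i (Set.mem_univ i)⟩
  map_add' p q := rfl
  map_smul' c p := rfl
  invFun v := ⟨fun i => (v i).1, fun i _ => (v i).2⟩
  left_inv q := rfl
  right_inv v := rfl

instance Pvec_fd (n : ℤ) : FiniteDimensional ℝ (Pvec n) :=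
  Module.Finite.equiv (pvecEquiv n).symm

lemma finrank_Pvec (n : ℤ) :
    Module.finrank ℝ (Pvec n) = 3 * Module.finrank ℝ (Pscal n) := by
  rw [(pvecEquiv n).finrank_eq, Module.finrank_pi_fintype]
  simp [Finset.sum_const]

lemma mulX_inj : Function.Injective mulX := by
  rw [← LinearMap.ker_eq_bot]
  apply (Submodule.eq_bot_iff _).mpr
  intro p hp
  have h0 : X 0 * p = 0 := congrFun (LinearMap.mem_ker.mp hp) 0
  rcases mul_eq_zero.mp h0 with h | h
  · exact absurd h (X_ne_zero 0)
  · exact h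

lemma finrank_rank_nullity (n : ℤ) (hn : 0 ≤ n) :
    Module.finrank ℝ (Submodule.map crossX (Pvec n)) + Module.finrank ℝ (Pscal (n - 1)) =
      Module.finrank ℝ (Pvec n) := by
  have h := LinearMap.finrank_range_add_finrank_ker (crossX.domRestrict (Pvec n))
  rw [LinearMap.range_domRestrict] at h
  have hker : Module.finrank ℝ (LinearMap.ker (crossX.domRestrict (Pvec n))) =
      Module.finrank ℝ (Pscal (n - 1)) := by
    rw [LinearMap.ker_domRestrict]
    have h1 : Submodule.comap (Pvec n).subtype (LinearMap.ker crossX) =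
        Submodule.comap (Pvec n).subtype (LinearMap.ker crossX ⊓ Pvec n) := by
      rw [Submodule.comap_inf, Submodule.comap_subtype_self, inf_top_eq]
    rw [h1]
    rw [(Submodule.comapSubtypeEquivOfLe (inf_le_right :
      LinearMap.ker crossX ⊓ Pvec n ≤ Pvec n)).finrank_eq]
    rw [ker_inf n hn]
    exact ((Submodule.equivMapOfInjective mulX mulX_inj (Pscal (n - 1))).finrank_eq).symm
  rw [hker] at h
  exact h

lemma six_choose (i : ℕ) : ((i + 3).choose 3 : ℤ) * 6 = (i + 1) * (i + 2) * (i + 3) := by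
  have h := Nat.choose_mul_factorial_mul_factorial (show 3 ≤ i + 3 by omega)
  rw [show i + 3 - 3 = i by omega] at h
  have hf : (i + 3).factorial = (i + 3) * ((i + 2) * ((i + 1) * i.factorial)) := by
    rw [show i + 3 = (i + 2) + 1 by omega, Nat.factorial_succ,
      show i + 2 = (i + 1) + 1 by omega, Nat.factorial_succ, Nat.factorial_succ]
  rw [hf] at h
  have h' : ((i + 3).choose 3 : ℤ) * 6 * i.factorial =
      ((i + 1) * (i + 2) * (i + 3)) * i.factorial := by
    have h6 : (Nat.factorial 3 : ℤ) = 6 := by norm_num [Nat.factorial]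
    have := congrArg (fun x : ℕ => (x : ℤ)) h
    push_cast at this
    rw [h6] at this
    linarith [this]
  have hfne : (i.factorial : ℤ) ≠ 0 := by
    exact_mod_cast Nat.factorial_ne_zero i
  exact mul_right_cancel₀ hfne h'

/-- `dim (x × P_{k-1}³) = dim P_k³ − dim P_{k+1} + 1`. -/
theorem dim_cross_space (k : ℕ) :
    (Module.finrank ℝ (Submodule.map crossX (Pvec ((k : ℤ) - 1))) : ℤ) =
      3 * ((k + 1) * (k + 2) * (k + 3)) / 6 - (k + 2) * (k + 3) * (k + 4) / 6 + 1 := by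
  rcases k with _ | j
  · -- k = 0
    have hbot : Pvec (((0:ℕ) : ℤ) - 1) = ⊥ := by
      apply (Submodule.eq_bot_iff _).mpr
      intro q hq
      funext i
      have h := hq i (Set.mem_univ i)
      rw [Pscal_neg (by norm_num : ((0:ℕ) : ℤ) - 1 < 0)] at h
      exact h
    rw [hbot, Submodule.map_bot]
    norm_num
  · -- k = j + 1
    have hn : ((j + 1 : ℕ) : ℤ) - 1 = ((j : ℕ) : ℤ) := by push_cast; ring
    have hrn := finrank_rank_nullity ((j : ℕ) : ℤ) (by positivity)
    rw [finrank_Pvec, finrank_Pscal j] at hrn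
    rw [hn]
    rcases j with _ | i
    · -- k = 1
      have hbot : Pscal (((0:ℕ) : ℤ) - 1) = ⊥ := Pscal_neg (by norm_num)
      rw [hbot] at hrn
      rw [show Module.finrank ℝ (⊥ : Submodule ℝ (MvPolynomial (Fin 3) ℝ)) = 0 from
        finrank_bot ℝ _] at hrn
      have hch : (0 + 3).choose 3 = 1 := by decide
      rw [hch] at hrn
      have hN : Module.finrank ℝ (Submodule.map crossX (Pvec (((0:ℕ)) : ℤ))) = 3 := by omega
      rw [hN]
      norm_num
    · -- k = i + 2
      set N : ℕ := Module.finrank ℝ (Submodule.map crossX (Pvec (((i + 1 : ℕ)) : ℤ))) with hNdef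
      set A := ((i + 3).choose 3 : ℤ) with hA
      set B := ((i + 1 + 3).choose 3 : ℤ) with hB
      set C := ((i + 2 + 3).choose 3 : ℤ) with hC
      set D := ((i + 3 + 3).choose 3 : ℤ) with hD
      have hcast : ((i + 1 : ℕ) : ℤ) - 1 = ((i : ℕ) : ℤ) := by push_cast; ring
      rw [hcast, finrank_Pscal i] at hrn
      have hrn' : (N : ℤ) + A = 3 * B := by rw [hA, hB]; exact_mod_cast hrn
      have h0 := six_choose i
      have h1 := six_choose (i + 1)
      have h2 := six_choose (i + 2)
      have h3 := six_choose (i + 3)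
      rw [← hA] at h0
      rw [show ((i + 1 + 3).choose 3 : ℤ) = B from rfl] at h1
      rw [show ((i + 2 + 3).choose 3 : ℤ) = C from rfl] at h2
      rw [show ((i + 3 + 3).choose 3 : ℤ) = D from rfl] at h3
      push_cast at h0 h1 h2 h3 ⊢
      have hp1 : 3 * (((i:ℤ) + 1 + 1 + 1) * ((i:ℤ) + 1 + 1 + 2) * ((i:ℤ) + 1 + 1 + 3))
          = 6 * (3 * C) := by linear_combination (-3) * h2
      have hp2 : ((i:ℤ) + 1 + 1 + 2) * ((i:ℤ) + 1 + 1 + 3) * ((i:ℤ) + 1 + 1 + 4)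
          = 6 * D := by linear_combination -h3
      rw [hp1, hp2, Int.mul_ediv_cancel_left _ (by norm_num : (6:ℤ) ≠ 0),
        Int.mul_ediv_cancel_left _ (by norm_num : (6:ℤ) ≠ 0)]
      have key6 : (3 * B - A) * 6 = (3 * C - D + 1) * 6 := by
        linear_combination 3 * h1 - h0 - 3 * h2 + h3
      omega
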